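/- Let n ≥ 1 and let x, v₁, v₂ ∈ ℝⁿ with ‖v₁‖ = ‖v₂‖ = 1. Set b₁ = ⟪x, v₁⟫, b₂ = ⟪x, v₂⟫ and α = ⟪v₁, v₂⟫, and assume |α| < 1, b₁ - α·b₂ ≠ 0 and |b₁| ≥ |b₂|. Define s = (b₂ - α·b₁)/(b₁ - α·b₂). Then |⟪x, v₁ + s·v₂⟫| / ‖v₁ + s·v₂‖ ≥ max(|b₁|, |b₂|). -/

import Mathlib

open scoped RealInnerProductSpace

/-- with `|b₁| ≥ |b₂|`, the maximal value
`|⟪x, v₁ + s v₂⟫| / ‖v₁ + s v₂‖` is at least `max (|b₁|, |b₂|)`. -/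
theorem sap_optimal_combination_ge_max {n : ℕ} (hn : 1 ≤ n)
    (x v₁ v₂ : EuclideanSpace ℝ (Fin n))
    (hv₁ : ‖v₁‖ = 1) (hv₂ : ‖v₂‖ = 1)
    (b₁ b₂ α : ℝ) (hb₁ : b₁ = ⟪x, v₁⟫) (hb₂ : b₂ = ⟪x, v₂⟫) (hα : α = ⟪v₁, v₂⟫)
    (hαlt : |α| < 1) (hden : b₁ - α * b₂ ≠ 0) (hb : |b₁| ≥ |b₂|)
    (s : ℝ) (hs : s = (b₂ - α * b₁) / (b₁ - α * b₂)) :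
    |⟪x, v₁ + s • v₂⟫| / ‖v₁ + s • v₂‖ ≥ max |b₁| |b₂| := by
  have hα2 : α ^ 2 < 1 := by nlinarith [abs_nonneg α, sq_abs α]
  have hinner : ⟪x, v₁ + s • v₂⟫ = b₁ + s * b₂ := by
    rw [inner_add_right, real_inner_smul_right, hb₁, hb₂]
  have hnorm2 : ‖v₁ + s • v₂‖ ^ 2 = 1 + 2 * α * s + s ^ 2 := by
    rw [norm_add_sq_real, real_inner_smul_right, norm_smul, hv₁, hv₂, ← hα]
    simp [sq_abs]
    ring
  have hd2 : (b₁ - α * b₂) ^ 2 > 0 := by positivity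
  set Q : ℝ := b₁ ^ 2 - 2 * α * b₁ * b₂ + b₂ ^ 2 with hQ
  have hQpos : 0 < Q := by nlinarith [sq_nonneg (b₁ - α * b₂), sq_nonneg b₂]
  have key : (1 + 2 * α * s + s ^ 2) * (b₁ - α * b₂) ^ 2 = (1 - α ^ 2) * Q := by
    subst hs; field_simp; ring
  have keyN : (b₁ + s * b₂) * (b₁ - α * b₂) = Q := by
    subst hs
    have e : (b₂ - α * b₁) / (b₁ - α * b₂) * (b₁ - α * b₂) = b₂ - α * b₁ :=
      div_mul_cancel₀ _ hden
    linear_combination b₂ * e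
  have hw2 : 0 < ‖v₁ + s • v₂‖ ^ 2 := by
    rw [hnorm2]
    nlinarith
  have hw : 0 < ‖v₁ + s • v₂‖ := by nlinarith [norm_nonneg (v₁ + s • v₂)]
  rw [hinner, max_eq_left hb, ge_iff_le, le_div_iff₀ hw]
  have keyN2 : (b₁ + s * b₂) ^ 2 * (b₁ - α * b₂) ^ 2 = Q ^ 2 := by
    rw [← mul_pow, keyN]
  have h2 : b₁ ^ 2 * (1 - α ^ 2) ≤ Q := by nlinarith [sq_nonneg (α * b₁ - b₂)]
  have h3 : b₁ ^ 2 * (1 - α ^ 2) * Q ≤ Q * Q := mul_le_mul_of_nonneg_right h2 hQpos.le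
  have h1 : (|b₁| * ‖v₁ + s • v₂‖) ^ 2 ≤ |b₁ + s * b₂| ^ 2 := by
    rw [mul_pow, sq_abs, sq_abs, hnorm2]
    have e1 : b₁ ^ 2 * (1 + 2 * α * s + s ^ 2) * (b₁ - α * b₂) ^ 2
        = b₁ ^ 2 * (1 - α ^ 2) * Q := by
      rw [mul_assoc, key]; ring
    have h4 : b₁ ^ 2 * (1 + 2 * α * s + s ^ 2) * (b₁ - α * b₂) ^ 2
        ≤ (b₁ + s * b₂) ^ 2 * (b₁ - α * b₂) ^ 2 := by
      rw [keyN2, e1, sq]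
      linarith
    exact le_of_mul_le_mul_right h4 hd2
  exact (pow_le_pow_iff_left₀ (mul_nonneg (abs_nonneg b₁) (norm_nonneg _))
    (abs_nonneg _) two_ne_zero).mp h1
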